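/- Let a, b, s > 0 and μ_n = Γ(a+sn)Γ(a+b)/(Γ(a)Γ(a+b+sn)). Then μ_n → 0 as n → ∞, and for each t > 0 the series ∑_{n≥1} μ_n^{-t/(2n)} diverges. -/

import Mathlib

open Filter Real

lemma gamma_supermod (a b d : ℝ) (ha : 0 < a) (hb : 0 < b) (hd : 0 ≤ d) :
    Real.Gamma (a + b) * Real.Gamma (a + d) ≤ Real.Gamma a * Real.Gamma (a + b + d) := by
  have hbd : 0 < b + d := by linarith
  have hmem1 : a ∈ Set.Ioi (0:ℝ) := ha
  have hmem2 : a + b + d ∈ Set.Ioi (0:ℝ) := by simp only [Set.mem_Ioi]; linarith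
  set w : ℝ := d / (b + d) with hw
  have hw1 : (0:ℝ) ≤ w := by positivity
  have hw2 : (0:ℝ) ≤ 1 - w := by
    rw [hw, sub_nonneg]
    exact div_le_one_of_le₀ (by linarith) hbd.le
  have hsum : w + (1 - w) = 1 := by ring
  have hsum' : (1 - w) + w = 1 := by ring
  have h1 := Real.convexOn_log_Gamma.2 hmem1 hmem2 hw1 hw2 hsum
  have h2 := Real.convexOn_log_Gamma.2 hmem1 hmem2 hw2 hw1 hsum'
  have e1 : w • a + (1 - w) • (a + b + d) = a + b := by
    simp only [smul_eq_mul, hw]; field_simp; ring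
  have e2 : (1 - w) • a + w • (a + b + d) = a + d := by
    simp only [smul_eq_mul, hw]; field_simp; ring
  rw [e1] at h1; rw [e2] at h2
  simp only [smul_eq_mul, Function.comp_apply] at h1 h2
  have key : Real.log (Real.Gamma (a + b)) + Real.log (Real.Gamma (a + d)) ≤
      Real.log (Real.Gamma a) + Real.log (Real.Gamma (a + b + d)) := by nlinarith [h1, h2]
  have g1 : 0 < Real.Gamma (a + b) := Real.Gamma_pos_of_pos (by linarith)
  have g2 : 0 < Real.Gamma (a + d) := Real.Gamma_pos_of_pos (by linarith)
  have g3 : 0 < Real.Gamma a := Real.Gamma_pos_of_pos ha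
  have g4 : 0 < Real.Gamma (a + b + d) := Real.Gamma_pos_of_pos (by linarith)
  have key2 : Real.log (Real.Gamma (a + b) * Real.Gamma (a + d)) ≤
      Real.log (Real.Gamma a * Real.Gamma (a + b + d)) := by
    rw [Real.log_mul g1.ne' g2.ne', Real.log_mul g3.ne' g4.ne']; exact key
  exact (Real.log_le_log_iff (by positivity) (by positivity)).mp key2

lemma gamma_lower_big (x b : ℝ) (hx : 0 < x) (hb : 1 ≤ b) :
    Real.Gamma x * x ^ b ≤ Real.Gamma (x + b) := by
  have hb0 : 0 < b := by linarith
  have hmem1 : x ∈ Set.Ioi (0:ℝ) := hx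
  have hmem2 : x + b ∈ Set.Ioi (0:ℝ) := by simp only [Set.mem_Ioi]; linarith
  have hw1 : (0:ℝ) ≤ (b - 1) / b := div_nonneg (by linarith) hb0.le
  have hw2 : (0:ℝ) ≤ 1 / b := by positivity
  have hsum : (b - 1) / b + 1 / b = 1 := by field_simp; ring
  have h1 := Real.convexOn_log_Gamma.2 hmem1 hmem2 hw1 hw2 hsum
  have e1 : ((b - 1) / b) • x + (1 / b) • (x + b) = x + 1 := by
    simp only [smul_eq_mul]; field_simp; ring
  rw [e1] at h1
  simp only [smul_eq_mul, Function.comp_apply] at h1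
  have hLx1 : Real.log (Real.Gamma (x + 1)) = Real.log (Real.Gamma x) + Real.log x := by
    rw [Real.Gamma_add_one hx.ne', Real.log_mul hx.ne' (Real.Gamma_pos_of_pos hx).ne']
    ring
  rw [hLx1] at h1
  have h2 := mul_le_mul_of_nonneg_left h1 hb0.le
  have e2 : b * ((b - 1) / b * Real.log (Real.Gamma x) + 1 / b * Real.log (Real.Gamma (x + b)))
      = (b - 1) * Real.log (Real.Gamma x) + Real.log (Real.Gamma (x + b)) := by
    field_simp
  rw [e2] at h2
  have key : Real.log (Real.Gamma x) + b * Real.log x ≤ Real.log (Real.Gamma (x + b)) := by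
    nlinarith [h2]
  have g1 : 0 < Real.Gamma x := Real.Gamma_pos_of_pos hx
  have g2 : 0 < Real.Gamma (x + b) := Real.Gamma_pos_of_pos (by linarith)
  have key2 : Real.log (Real.Gamma x * x ^ b) ≤ Real.log (Real.Gamma (x + b)) := by
    rw [Real.log_mul g1.ne' (Real.rpow_pos_of_pos hx b).ne', Real.log_rpow hx]
    exact key
  exact (Real.log_le_log_iff (by positivity) g2).mp key2

lemma gamma_lower_small (x b : ℝ) (hx : 0 < x) (hb : 0 < b) (hb1 : b ≤ 1)
    (h1 : 0 < x + b - 1) :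
    Real.Gamma x * (x + b - 1) ^ b ≤ Real.Gamma (x + b) := by
  have hmem1 : x + b ∈ Set.Ioi (0:ℝ) := by simp only [Set.mem_Ioi]; linarith
  have hmem2 : x + b - 1 ∈ Set.Ioi (0:ℝ) := h1
  have hw1 : (0:ℝ) ≤ 1 - b := by linarith
  have hsum : (1 - b) + b = 1 := by ring
  have hcx := Real.convexOn_log_Gamma.2 hmem1 hmem2 hw1 hb.le hsum
  have e1 : (1 - b) • (x + b) + b • (x + b - 1) = x := by
    simp only [smul_eq_mul]; ring
  rw [e1] at hcx
  simp only [smul_eq_mul, Function.comp_apply] at hcx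
  have hrec : Real.log (Real.Gamma (x + b)) =
      Real.log (Real.Gamma (x + b - 1)) + Real.log (x + b - 1) := by
    have h2 := Real.Gamma_add_one h1.ne'
    have e : x + b - 1 + 1 = x + b := by ring
    rw [e] at h2
    rw [h2, Real.log_mul h1.ne' (Real.Gamma_pos_of_pos h1).ne']
    ring
  have key : Real.log (Real.Gamma x) + b * Real.log (x + b - 1) ≤
      Real.log (Real.Gamma (x + b)) := by
    rw [hrec]; nlinarith [hcx, hrec]
  have g1 : 0 < Real.Gamma x := Real.Gamma_pos_of_pos hx
  have g2 : 0 < Real.Gamma (x + b) := Real.Gamma_pos_of_pos (by linarith)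
  have key2 : Real.log (Real.Gamma x * (x + b - 1) ^ b) ≤
      Real.log (Real.Gamma (x + b)) := by
    rw [Real.log_mul g1.ne' (Real.rpow_pos_of_pos h1 b).ne', Real.log_rpow h1]
    exact key
  exact (Real.log_le_log_iff (by positivity) g2).mp key2

/-- For a,b,s > 0, the Beta-type moments μ_n = Γ(a+sn)Γ(a+b)/(Γ(a)Γ(a+b+sn))
tend to 0, and for every t > 0 the Carleman sum ∑ μ_n^{-t/(2n)} diverges. -/
theorem beta_moments_MD (a b s : ℝ) (ha : 0 < a) (hb : 0 < b) (hs : 0 < s)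
    (μ : ℕ → ℝ)
    (hμ : ∀ n : ℕ, μ n = Real.Gamma (a + s * n) * Real.Gamma (a + b) /
      (Real.Gamma a * Real.Gamma (a + b + s * n))) :
    Tendsto μ atTop (nhds 0) ∧
    ∀ t : ℝ, 0 < t →
      ¬ Summable (fun n : ℕ => μ (n + 1) ^ (-(t / (2 * ((n : ℝ) + 1))))) := by
  have gA : 0 < Real.Gamma a := Real.Gamma_pos_of_pos ha
  have gAB : 0 < Real.Gamma (a + b) := Real.Gamma_pos_of_pos (by linarith)
  set C : ℝ := Real.Gamma (a + b) / Real.Gamma a with hC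
  have hCpos : 0 < C := by positivity
  constructor
  · -- μ → 0
    set q : ℝ := if b ≤ 1 then b - 1 else 0 with hq
    have ht : Tendsto (fun n : ℕ => a + s * n + q) atTop atTop := by
      apply tendsto_atTop_add_const_right
      apply tendsto_atTop_add_const_left
      exact (tendsto_natCast_atTop_atTop).const_mul_atTop hs
    have hg : Tendsto (fun n : ℕ => C * (a + s * n + q) ^ (-b)) atTop (nhds 0) := by
      have h1 := (tendsto_rpow_neg_atTop hb).comp ht
      have h2 := h1.const_mul C
      simpa using h2
    refine squeeze_zero' ?_ ?_ hg
    · filter_upwards with n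
      rw [hμ n]
      have g1 : 0 < Real.Gamma (a + s * n) := Real.Gamma_pos_of_pos (by positivity)
      have g2 : 0 < Real.Gamma (a + b + s * n) := Real.Gamma_pos_of_pos (by positivity)
      positivity
    · filter_upwards [ht.eventually_gt_atTop 1] with n hn
      set x : ℝ := a + s * n with hx
      have hx0 : 0 < x := by positivity
      have hxq : 0 < x + q := by
        have : 1 < x + q := hn
        linarith
      have g2 : 0 < Real.Gamma (x + b) := Real.Gamma_pos_of_pos (by linarith)
      have hkey : Real.Gamma x * (x + q) ^ b ≤ Real.Gamma (x + b) := by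
        by_cases hb1 : b ≤ 1
        · have hq' : q = b - 1 := by rw [hq, if_pos hb1]
          have : 0 < x + b - 1 := by rw [hq'] at hxq; linarith
          have := gamma_lower_small x b hx0 hb hb1 this
          calc Real.Gamma x * (x + q) ^ b = Real.Gamma x * (x + b - 1) ^ b := by
                rw [hq']; ring_nf
            _ ≤ Real.Gamma (x + b) := this
        · have hq' : q = 0 := by rw [hq, if_neg hb1]
          rw [hq', add_zero]
          exact gamma_lower_big x b hx0 (le_of_lt (not_le.mp hb1))
      have hdiv : Real.Gamma x / Real.Gamma (x + b) ≤ (x + q) ^ (-b) := by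
        rw [Real.rpow_neg hxq.le, div_le_iff₀ g2, inv_mul_eq_div, le_div_iff₀
          (Real.rpow_pos_of_pos hxq b)]
        exact hkey
      have : μ n = C * (Real.Gamma x / Real.Gamma (x + b)) := by
        rw [hμ n, hC, show a + b + s * (n:ℝ) = x + b by rw [hx]; ring, ← hx]; field_simp
      rw [this]
      exact mul_le_mul_of_nonneg_left hdiv hCpos.le
  · -- divergence
    intro t ht hsum
    have hone : ∀ n : ℕ, 1 ≤ μ (n + 1) ^ (-(t / (2 * ((n : ℝ) + 1)))) := by
      intro n
      have hd : (0:ℝ) ≤ s * (n + 1 : ℕ) := by positivity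
      have g1 : 0 < Real.Gamma (a + s * (n + 1 : ℕ)) := Real.Gamma_pos_of_pos (by positivity)
      have g2 : 0 < Real.Gamma (a + b + s * (n + 1 : ℕ)) := Real.Gamma_pos_of_pos (by positivity)
      have hμpos : 0 < μ (n + 1) := by
        rw [hμ (n + 1)]; positivity
      have hμle1 : μ (n + 1) ≤ 1 := by
        rw [hμ (n + 1), div_le_one (by positivity)]
        have := gamma_supermod a b (s * (n + 1 : ℕ)) ha hb hd
        nlinarith [this]
      apply Real.one_le_rpow_of_pos_of_le_one_of_nonpos hμpos hμle1
      have : 0 < t / (2 * ((n : ℝ) + 1)) := by positivity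
      linarith
    have h0 := hsum.tendsto_atTop_zero
    obtain ⟨n, hn⟩ := (h0.eventually_lt_const one_pos).exists
    exact absurd (hone n) (not_le.mpr hn)
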